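/- Let A be an n×m real matrix with n ≥ 2 and let D = D(A) be its (n−1)×m payoff difference matrix. There exists a mixed strategy x ∈ ℝᵐ (x ≥ 0 componentwise, ∑_{i=1}^m x_i = 1) with Ax = (c,…,c)ᵀ for some c ∈ ℝ if and only if for every vector v ∈ ℝ^{n−1} there exists a column d of D with vᵀd ≤ 0 (i.e., the union of the half spaces HS(d) over all columns d of D equals ℝ^{n−1}). -/

import Mathlib

/-- The payoff difference matrix `D(A)`: row `k` is row `k` of `A` minus row `k+1`. -/
def Dmat {n m : ℕ} (A : Matrix (Fin (n + 1)) (Fin m) ℝ) :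
    Matrix (Fin n) (Fin m) ℝ :=
  fun k i => A k.castSucc i - A k.succ i

/-- A player with `n × m` payoff matrix `A` (with `n ≥ 2`, here `n = n' + 2`) can be made
indifferent between all pure strategies by some mixed strategy of the opponent if and only
if the union of the half spaces induced by the columns of `D(A)` is all of `ℝ^{n-1}`,
i.e., for every `v ∈ ℝ^{n-1}` there is a column `d` of `D(A)` with `vᵀd ≤ 0`. -/
theorem indifference_iff_halfspaces_cover {n' m : ℕ}
    (A : Matrix (Fin (n' + 2)) (Fin m) ℝ) :
    (∃ x : Fin m → ℝ, (∀ i, 0 ≤ x i) ∧ (∑ i, x i = 1) ∧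
        ∃ c : ℝ, ∀ j, A.mulVec x j = c) ↔
      ∀ v : Fin (n' + 1) → ℝ, ∃ i : Fin m, ∑ k, v k * Dmat A k i ≤ 0 := by
  constructor
  · rintro ⟨x, hx0, hx1, c, hc⟩ v
    by_contra hcon
    push_neg at hcon
    have key : ∑ i, x i * (∑ k, v k * Dmat A k i) = 0 := by
      have : ∑ i, x i * (∑ k, v k * Dmat A k i)
          = ∑ k, v k * (∑ i, Dmat A k i * x i) := by
        simp_rw [Finset.mul_sum]
        rw [Finset.sum_comm]
        apply Finset.sum_congr rfl; intro k _
        apply Finset.sum_congr rfl; intro i _; ring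
      rw [this]
      have hzero : ∀ k : Fin (n' + 1), ∑ i, Dmat A k i * x i = 0 := by
        intro k
        have : ∑ i, Dmat A k i * x i
            = A.mulVec x k.castSucc - A.mulVec x k.succ := by
          simp only [Dmat, Matrix.mulVec, dotProduct, sub_mul, Finset.sum_sub_distrib]
        rw [this, hc, hc, sub_self]
      simp [hzero]
    have hexpos : ∃ i, 0 < x i := by
      by_contra hno
      push_neg at hno
      have : ∑ i, x i = 0 :=
        Finset.sum_eq_zero fun i _ => le_antisymm (hno i) (hx0 i)
      rw [this] at hx1; norm_num at hx1
    obtain ⟨i0, hi0⟩ := hexpos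
    have hpos : 0 < ∑ i, x i * (∑ k, v k * Dmat A k i) := by
      apply Finset.sum_pos'
      · intro i _
        exact mul_nonneg (hx0 i) (le_of_lt (hcon i))
      · exact ⟨i0, Finset.mem_univ _, mul_pos hi0 (hcon i0)⟩
    rw [key] at hpos; exact lt_irrefl 0 hpos
  · intro h
    set d : Fin m → (Fin (n' + 1) → ℝ) := fun i k => Dmat A k i with hd
    have hmem : (0 : Fin (n' + 1) → ℝ) ∈ convexHull ℝ (Set.range d) := by
      by_contra h0
      obtain ⟨f, u, hfu, hub⟩ :=
        geometric_hahn_banach_point_closed (convex_convexHull ℝ _)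
          ((Set.finite_range d).isClosed_convexHull (𝕜 := ℝ)) h0
      have hf0 : f 0 = 0 := map_zero f
      have hupos : 0 < u := by rw [← hf0]; exact hfu
      set v : Fin (n' + 1) → ℝ := fun k => f (Pi.single k 1) with hv
      obtain ⟨i, hi⟩ := h v
      have hrep : f (d i) = ∑ k, v k * Dmat A k i := by
        have hdi : d i = ∑ k, Dmat A k i • (Pi.single k (1 : ℝ) : Fin (n' + 1) → ℝ) := by
          ext j
          simp [hd, Pi.single_apply, Finset.sum_ite_eq', eq_comm]
        rw [hdi, map_sum]
        apply Finset.sum_congr rfl; intro k _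
        rw [map_smul]; simp only [hv, smul_eq_mul]; ring
      have hgt : u < f (d i) :=
        hub _ (subset_convexHull ℝ _ (Set.mem_range_self i))
      rw [hrep] at hgt
      have : ∑ k, v k * Dmat A k i ≤ 0 := hi
      linarith
    rw [convexHull_range_eq_exists_affineCombination] at hmem
    obtain ⟨s, w, hw0, hw1, hcomb⟩ := hmem
    rw [Finset.affineCombination_eq_linear_combination s d w hw1] at hcomb
    refine ⟨fun i => if i ∈ s then w i else 0, ?_, ?_, ?_⟩
    · intro i
      by_cases hi : i ∈ s <;> simp [hi]
      exact hw0 i hi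
    · rw [Finset.sum_ite_mem, Finset.univ_inter]; exact hw1
    · set x : Fin m → ℝ := fun i => if i ∈ s then w i else 0 with hx
      have hDx : ∀ k : Fin (n' + 1),
          A.mulVec x k.castSucc = A.mulVec x k.succ := by
        intro k
        have h1 : ∑ i, x i * d i k = 0 := by
          have := congrFun hcomb k
          simp only [Finset.sum_apply, Pi.smul_apply, smul_eq_mul, Pi.zero_apply] at this
          rw [← this]
          rw [← Finset.sum_subset (Finset.subset_univ s)]
          · apply Finset.sum_congr rfl
            intro i hi; simp [hx, hi]
          · intro i _ hi; simp [hx, hi]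
        have h2 : ∑ i, x i * d i k
            = A.mulVec x k.castSucc - A.mulVec x k.succ := by
          simp only [hd, Dmat, Matrix.mulVec, dotProduct, mul_sub, Finset.sum_sub_distrib]
          congr 1 <;> apply Finset.sum_congr rfl <;> intro i _ <;> ring
        rw [h2] at h1; linarith
      refine ⟨A.mulVec x 0, ?_⟩
      intro j
      induction j using Fin.induction with
      | zero => rfl
      | succ i ih => rw [← hDx i]; exact ih
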